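/- Let L = ⟨x₁,x₂,x₃ | 2x₁=2x₂=n x₃ = c⟩ with n ≥ 2, ordered by x ≥ 0 iff l ≥ 0 in normal form, and let δ : L → ℤ be the group homomorphism with δ(x₁)=δ(x₂)=lcm(2,n)/2 and δ(x₃)=lcm(2,n)/n. If x ∈ L satisfies −c ≤ x ≤ c and δ(x) ≥ 0, then x satisfies one of: (i) 0 ≤ x ≤ c; (ii) x = x₁ − x₂; (iii) x = xᵢ − k·x₃ for some i ∈ {1,2} and some integer k with 0 < k ≤ n/2. -/

import Mathlib

/-- The subgroup of relations `2x₁ = 2x₂` and `2x₁ = n·x₃` inside ℤ³. -/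
def rel (n : ℕ) : AddSubgroup (ℤ × ℤ × ℤ) :=
  AddSubgroup.closure {(2, -2, 0), (2, 0, -(n : ℤ))}

/-- The rank one abelian group `L = ⟨x₁,x₂,x₃ | 2x₁ = 2x₂ = n·x₃⟩`. -/
abbrev L (n : ℕ) := (ℤ × ℤ × ℤ) ⧸ rel n

/-- The generator x₁ of L. -/
def x1 (n : ℕ) : L n := QuotientAddGroup.mk' (rel n) (1, 0, 0)

/-- The generator x₂ of L. -/
def x2 (n : ℕ) : L n := QuotientAddGroup.mk' (rel n) (0, 1, 0)

/-- The generator x₃ of L. -/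
def x3 (n : ℕ) : L n := QuotientAddGroup.mk' (rel n) (0, 0, 1)

/-- The canonical element c = 2x₁ (= 2x₂ = n·x₃). -/
def cc (n : ℕ) : L n := (2 : ℤ) • x1 n

/-- The dualizing element ω = c - x₁ - x₂ - x₃. -/
def om (n : ℕ) : L n := cc n - x1 n - x2 n - x3 n

/-- `x ≥ 0` in L: the coefficient of `c` in the (unique) normal form
`x = l₁x₁ + l₂x₂ + l₃x₃ + l·c` (with 0 ≤ l₁,l₂ ≤ 1, 0 ≤ l₃ ≤ n-1) is nonnegative. -/
def Nonneg (n : ℕ) (x : L n) : Prop :=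
  ∃ l1 l2 l3 l : ℤ, 0 ≤ l1 ∧ l1 ≤ 1 ∧ 0 ≤ l2 ∧ l2 ≤ 1 ∧ 0 ≤ l3 ∧ l3 ≤ (n : ℤ) - 1 ∧
    0 ≤ l ∧ x = l1 • x1 n + l2 • x2 n + l3 • x3 n + l • cc n

/-- The order on L: `x ≤ y` iff `y - x ≥ 0`. -/
def leL (n : ℕ) (x y : L n) : Prop := Nonneg n (y - x)

def fmap (n : ℕ) : (ℤ × ℤ × ℤ) →+ ZMod 2 × ZMod 2 × ℤ :=
  AddMonoidHom.mk' (fun p => ((p.1 : ZMod 2), (p.2.1 : ZMod 2), n * (p.1 + p.2.1) + 2 * p.2.2))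
    (by intro a b; simp [Prod.ext_iff]; push_cast; ring_nf)

lemma rel_le_ker (n : ℕ) : rel n ≤ (fmap n).ker := by
  rw [rel, AddSubgroup.closure_le]
  rintro g hg
  simp only [Set.mem_insert_iff, Set.mem_singleton_iff] at hg
  rcases hg with rfl | rfl <;>
    refine AddMonoidHom.mem_ker.2 (Prod.ext ?_ (Prod.ext ?_ ?_)) <;>
    simp [fmap] <;> first | decide | ring

def F (n : ℕ) : L n →+ ZMod 2 × ZMod 2 × ℤ :=
  QuotientAddGroup.lift (rel n) (fmap n) (fun g hg => rel_le_ker n hg)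

lemma F_x1 (n : ℕ) : F n (x1 n) = (1, 0, (n : ℤ)) := by
  simp [F, x1, fmap, Prod.ext_iff]

lemma F_x2 (n : ℕ) : F n (x2 n) = (0, 1, (n : ℤ)) := by
  simp [F, x2, fmap, Prod.ext_iff]

lemma F_x3 (n : ℕ) : F n (x3 n) = (0, 0, 2) := by
  simp [F, x3, fmap, Prod.ext_iff]

lemma F_cc (n : ℕ) : F n (cc n) = (0, 0, (2 * n : ℤ)) := by
  rw [cc, map_zsmul, F_x1]
  simp only [Prod.smul_mk, Prod.mk.injEq, zsmul_eq_mul, smul_eq_mul]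
  refine ⟨by decide, by decide, trivial⟩

lemma cc_eq_two_x2 (n : ℕ) : cc n = (2 : ℤ) • x2 n := by
  rw [cc, x1, x2, ← map_zsmul, ← map_zsmul]
  rw [QuotientAddGroup.mk'_eq_mk']
  refine ⟨(-2, 2, 0), neg_mem (AddSubgroup.subset_closure (Set.mem_insert _ _)), ?_⟩
  simp only [Prod.smul_mk, Prod.mk_add_mk, Prod.mk.injEq, smul_eq_mul]
  norm_num

lemma cc_eq_n_x3 (n : ℕ) : cc n = (n : ℤ) • x3 n := by
  have hm : ((-2, 0, (n:ℤ)) : ℤ × ℤ × ℤ) ∈ rel n := by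
    have h : ((-2, 0, (n:ℤ)) : ℤ × ℤ × ℤ) = -(2, 0, -(n:ℤ)) := by
      simp [Prod.ext_iff]
    rw [h, rel]
    exact neg_mem (AddSubgroup.subset_closure (by right; rfl))
  rw [cc, x1, x3, ← map_zsmul, ← map_zsmul]
  rw [QuotientAddGroup.mk'_eq_mk']
  refine ⟨(-2, 0, (n : ℤ)), hm, ?_⟩
  simp only [Prod.smul_mk, Prod.mk_add_mk, Prod.mk.injEq, smul_eq_mul]
  norm_num

lemma aux_cases (n a1 a2 a3 b3 b d1 d3 : ℤ)
    (hn : 2 ≤ n) (ha1 : 0 ≤ a1) (ha1' : a1 ≤ 1) (ha2 : 0 ≤ a2) (ha2' : a2 ≤ 1)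
    (ha3 : 0 ≤ a3) (ha3' : a3 ≤ n - 1) (hb3 : 0 ≤ b3) (hb3' : b3 ≤ n - 1) (hb : 0 ≤ b)
    (hd1 : 0 < d1) (hd3 : 0 < d3) (hm : 2 * d1 = n * d3)
    (e3 : 2 * a1 * n + 2 * a2 * n + 2 * a3 + 2 * b3 + 2 * b * n = 4 * n)
    (hx : 0 ≤ (a1 + a2) * d1 + a3 * d3 + (0 - 1) * (2 * d1)) :
    (a1 = 1 ∧ a2 = 1 ∧ a3 = 0) ∨
    (a1 + a2 = 1 ∧ a3 + b3 = n ∧ n ≤ 2 * a3) := by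
  have key : a1 * n + a2 * n + a3 + b3 + b * n = 2 * n := by linarith
  have ha10 : a1 = 0 ∨ a1 = 1 := by omega
  have ha20 : a2 = 0 ∨ a2 = 1 := by omega
  rcases ha10 with rfl | rfl <;> rcases ha20 with rfl | rfl
  · -- (0,0): a3 + b3 + b*n = 2n; contradiction with δ
    exfalso
    have hble : b ≤ 2 := by nlinarith
    interval_cases b
    · omega
    · have h3 : a3 + b3 = n := by linarith
      nlinarith
    · have h3 : a3 = 0 := by linarith
      nlinarith
  · -- (0,1)
    have hble : b ≤ 1 := by nlinarith
    interval_cases b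
    · have h3 : a3 + b3 = n := by linarith
      have h2a3 : n ≤ 2 * a3 := by nlinarith
      exact Or.inr ⟨by ring, h3, h2a3⟩
    · exfalso
      have h3 : a3 = 0 := by linarith
      nlinarith
  · -- (1,0)
    have hble : b ≤ 1 := by nlinarith
    interval_cases b
    · have h3 : a3 + b3 = n := by linarith
      have h2a3 : n ≤ 2 * a3 := by nlinarith
      exact Or.inr ⟨by ring, h3, h2a3⟩
    · exfalso
      have h3 : a3 = 0 := by linarith
      nlinarith
  · -- (1,1)
    have h3 : a3 = 0 := by nlinarith
    exact Or.inl ⟨rfl, rfl, h3⟩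

/-- if `-c ≤ x ≤ c` and `δ(x) ≥ 0` then (i) `0 ≤ x ≤ c`, or (ii) `x = x₁ - x₂`,
or (iii) `x = xᵢ - k·x₃` for some `i ∈ {1,2}` and `0 < k ≤ n/2`. -/
theorem three_choices (n : ℕ) (hn : 2 ≤ n) (δ : L n →+ ℤ)
    (hδ1 : δ (x1 n) = (Nat.lcm 2 n : ℤ) / 2) (hδ2 : δ (x2 n) = (Nat.lcm 2 n : ℤ) / 2)
    (hδ3 : δ (x3 n) = (Nat.lcm 2 n : ℤ) / n)
    (x : L n) (hxl : leL n (-(cc n)) x) (hxu : leL n x (cc n)) (hx : 0 ≤ δ x) :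
    (Nonneg n x ∧ leL n x (cc n)) ∨
    x = x1 n - x2 n ∨
    (∃ k : ℤ, 0 < k ∧ 2 * k ≤ (n : ℤ) ∧
      (x = x1 n - k • x3 n ∨ x = x2 n - k • x3 n)) := by
  have hxu' := hxu
  obtain ⟨a1, a2, a3, a, ha1, ha1', ha2, ha2', ha3, ha3', ha, hA⟩ := hxl
  obtain ⟨b1, b2, b3, b, hb1, hb1', hb2, hb2', hb3, hb3', hb, hB⟩ := hxu
  rw [sub_neg_eq_add] at hA
  -- the normal form of x
  have hx' : x = a1 • x1 n + a2 • x2 n + a3 • x3 n + (a - 1) • cc n := by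
    have h0 : x = (x + cc n) - cc n := by abel
    rw [h0, hA, sub_smul, one_smul]; abel
  -- numeric facts about lcm
  set m : ℤ := (Nat.lcm 2 n : ℤ) with hmdef
  set d1 : ℤ := m / 2 with hd1def
  set d3 : ℤ := m / (n : ℤ) with hd3def
  have hn' : (2 : ℤ) ≤ (n : ℤ) := by exact_mod_cast hn
  have hmpos : 0 < m := by
    rw [hmdef]
    have : 0 < Nat.lcm 2 n := Nat.pos_of_ne_zero (Nat.lcm_ne_zero (by norm_num) (by omega))
    exact_mod_cast this
  have hm2 : 2 * d1 = m := by
    rw [hd1def]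
    refine Int.mul_ediv_cancel' ?_
    rw [hmdef]
    exact_mod_cast Int.natCast_dvd_natCast.2 (Nat.dvd_lcm_left 2 n)
  have hmn : (n : ℤ) * d3 = m := by
    rw [hd3def]
    refine Int.mul_ediv_cancel' ?_
    rw [hmdef]
    exact_mod_cast Int.natCast_dvd_natCast.2 (Nat.dvd_lcm_right 2 n)
  have hd1pos : 0 < d1 := by nlinarith
  have hd3pos : 0 < d3 := by nlinarith
  -- value of δ on x
  have hδc : δ (cc n) = 2 * d1 := by rw [cc, map_zsmul, hδ1, smul_eq_mul]
  have hδx : δ x = (a1 + a2) * d1 + a3 * d3 + (a - 1) * (2 * d1) := by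
    rw [hx']
    simp only [map_add, map_zsmul, hδ1, hδ2, hδ3, hδc, smul_eq_mul, ← hd1def, ← hd3def]
    ring
  rw [hδx] at hx
  by_cases hage : 1 ≤ a
  · exact Or.inl ⟨⟨a1, a2, a3, a - 1, ha1, ha1', ha2, ha2', ha3, ha3', by omega, hx'⟩, hxu'⟩
  have ha0 : a = 0 := by omega
  subst ha0
  -- the key equation from applying F to the sum of the two decompositions
  have hsum : (a1 • x1 n + a2 • x2 n + a3 • x3 n + (0:ℤ) • cc n) +
      (b1 • x1 n + b2 • x2 n + b3 • x3 n + b • cc n) = cc n + cc n := by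
    rw [← hA, ← hB]; abel
  have hF := congrArg (F n) hsum
  simp only [map_add, map_zsmul, F_x1, F_x2, F_x3, F_cc, Prod.smul_mk, Prod.mk_add_mk,
    Prod.mk.injEq, zsmul_eq_mul, smul_eq_mul] at hF
  obtain ⟨e1, e2, e3⟩ := hF
  have hpar1 : b1 = a1 := by
    have h0 : a1 = 0 ∨ a1 = 1 := by omega
    have h1 : b1 = 0 ∨ b1 = 1 := by omega
    rcases h0 with rfl | rfl <;> rcases h1 with rfl | rfl <;> first | rfl | simp at e1
  have hpar2 : b2 = a2 := by
    have h0 : a2 = 0 ∨ a2 = 1 := by omega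
    have h1 : b2 = 0 ∨ b2 = 1 := by omega
    rcases h0 with rfl | rfl <;> rcases h1 with rfl | rfl <;> first | rfl | simp at e2
  rw [hpar1, hpar2] at e3
  have e3'' : 2*a1*(n:ℤ) + 2*a2*(n:ℤ) + 2*a3 + 2*b3 + 2*b*(n:ℤ) = 4*(n:ℤ) := by
    linear_combination e3
  have hmrel : 2 * d1 = (n:ℤ) * d3 := by rw [hm2]; exact hmn.symm
  rcases aux_cases (n:ℤ) a1 a2 a3 b3 b d1 d3 hn' ha1 ha1' ha2 ha2' ha3 ha3' hb3 hb3' hb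
      hd1pos hd3pos hmrel e3'' hx with ⟨rfl, rfl, rfl⟩ | ⟨hsum1, h3, h2a3⟩
  · -- x = x1 - x2
    refine Or.inr (Or.inl ?_)
    rw [hx', cc_eq_two_x2]
    module
  · -- case (iii)
    have hk1 : 0 < (n:ℤ) - a3 := by omega
    have hk2 : 2 * ((n:ℤ) - a3) ≤ (n:ℤ) := by omega
    have hcase : (a1 = 1 ∧ a2 = 0) ∨ (a1 = 0 ∧ a2 = 1) := by omega
    rcases hcase with ⟨rfl, rfl⟩ | ⟨rfl, rfl⟩
    · refine Or.inr (Or.inr ⟨(n:ℤ) - a3, hk1, hk2, Or.inl ?_⟩)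
      rw [hx', cc_eq_n_x3]
      module
    · refine Or.inr (Or.inr ⟨(n:ℤ) - a3, hk1, hk2, Or.inr ?_⟩)
      rw [hx', cc_eq_n_x3]
      module
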